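/- In the ring of formal power series in y with coefficients in ℤ[x]: (1 − y − (x+1)y²) · ( ∑_{n≥0} Q_n(x) y^n − (1+x)y + 1 ) = 2 − y. -/

import Mathlib

open Polynomial

/-- The cube polynomials `Q n` of the matchable Lucas cubes. -/
noncomputable def Q : ℕ → Polynomial ℤ
  | 0 => 1
  | 1 => 2 + X
  | 2 => 3 + 2 * X
  | 3 => 4 + 3 * X
  | (n + 4) => Q (n + 3) + (1 + X) * Q (n + 2)

/-- `q n k` : the number of `k`-dimensional induced hypercubes of `Ω_n`,
i.e. the coefficient of `x^k` in `Q n`. -/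
noncomputable def q (n k : ℕ) : ℤ := (Q n).coeff k

theorem generating_function_of_Q :
    (1 - PowerSeries.X - PowerSeries.C (X + 1 : Polynomial ℤ) * PowerSeries.X ^ 2)
        * (PowerSeries.mk Q - PowerSeries.C (1 + X : Polynomial ℤ) * PowerSeries.X + 1)
      = 2 - PowerSeries.X := by
  set B := PowerSeries.mk Q - PowerSeries.C (1 + X : Polynomial ℤ) * PowerSeries.X + 1 with hB
  have hb : ∀ n, PowerSeries.coeff n B =
      Q n - (1 + X) * (if 1 = n then 1 else 0) + (if n = 0 then 1 else 0) := by
    intro n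
    rw [hB, map_add, map_sub, PowerSeries.coeff_C_mul]
    simp [PowerSeries.coeff_X, PowerSeries.coeff_one, eq_comm]
  have h : (1 - PowerSeries.X - PowerSeries.C (X + 1 : Polynomial ℤ) * PowerSeries.X ^ 2) * B
      = B - PowerSeries.X * B - PowerSeries.C (X + 1 : Polynomial ℤ) * (PowerSeries.X ^ 2 * B) := by
    ring
  rw [h]
  refine PowerSeries.ext fun n => ?_
  rw [map_sub, map_sub, map_sub, PowerSeries.coeff_C_mul]
  have h2 : ((2 : PowerSeries (Polynomial ℤ)) : PowerSeries (Polynomial ℤ)) =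
      PowerSeries.C (2 : Polynomial ℤ) := by
    simp [map_ofNat]
  match n with
  | 0 =>
    simp [hb, Q, h2, PowerSeries.coeff_X]
    ring
  | 1 =>
    rw [PowerSeries.coeff_succ_X_mul, PowerSeries.coeff_X_pow_mul']
    simp [hb, Q, h2, PowerSeries.coeff_X]
    ring
  | 2 =>
    rw [PowerSeries.coeff_succ_X_mul, show (2:ℕ) = 0 + 2 from rfl,
      PowerSeries.coeff_X_pow_mul]
    simp [hb, Q, h2, PowerSeries.coeff_X]
    ring
  | 3 =>
    rw [show (3:ℕ) = 2 + 1 from rfl, PowerSeries.coeff_succ_X_mul,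
      show (2:ℕ) + 1 = 1 + 2 from rfl, PowerSeries.coeff_X_pow_mul]
    simp [hb, Q, h2, PowerSeries.coeff_X]
    ring
  | (m + 4) =>
    rw [show m + 4 = (m + 3) + 1 from rfl, PowerSeries.coeff_succ_X_mul,
      show m + 3 + 1 = (m + 2) + 2 from by ring, PowerSeries.coeff_X_pow_mul]
    simp [hb, Q, h2, PowerSeries.coeff_X]
    ring
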